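/- The quotient of R₂ by the two-sided ideal N generated by (tst)³ has finite rank as a ℤ-module; in particular only finitely many monomials in s, t are nonzero modulo N. -/

import Mathlib

/-!
The tree-indexed vector space `V` over `ℚ` with basis the free monoid on two letters
(encoded as `List Bool`, with `false` the letter `0` and `true` the letter `1`).
The recursive matrices `s = [[0,0],[1,0]]` and `t = [[0,t],[0,s]]` of the ring `R₂`
act on the decomposition `V = ℚ·φ ⊕ 0V ⊕ 1V` by the block-matrix recursion.
-/

noncomputable section

abbrev V : Type := List Bool →₀ ℚ

/-- Prefixing by a letter: the embedding `V → yV`. -/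
def pre (b : Bool) : V →ₗ[ℚ] V := Finsupp.lmapDomain ℚ ℚ (List.cons b)

/-- Value of `s = [[0,0],[1,0]]` on a basis word. -/
def Sfun : List Bool → V
  | [] => 0
  | false :: u => Finsupp.single (true :: u) 1
  | true :: _ => 0

/-- Value of `t = [[0,t],[0,s]]` on a basis word, by recursion. -/
def Tfun : List Bool → V
  | [] => 0
  | false :: _ => 0
  | true :: u => pre false (Tfun u) + pre true (Sfun u)

/-- The generator `s` of `R₂`. -/
def sR : Module.End ℚ V := Finsupp.linearCombination ℚ Sfun

/-- The generator `t` of `R₂`. -/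
def tR : Module.End ℚ V := Finsupp.linearCombination ℚ Tfun

/-- The level-preserving operator with block form `[[e,0,0],[0,A,B],[0,C,D]]` on
`V = ℚ·φ ⊕ 0V ⊕ 1V`, written `e ⊕ [[A,B],[C,D]]`. -/
def blk (e : ℚ) (A B C D : Module.End ℚ V) : Module.End ℚ V :=
  Finsupp.linearCombination ℚ (fun w => match w with
    | [] => Finsupp.single ([] : List Bool) e
    | false :: u => pre false (A (Finsupp.single u 1)) + pre true (C (Finsupp.single u 1))
    | true :: u => pre false (B (Finsupp.single u 1)) + pre true (D (Finsupp.single u 1)))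

/-- The monomial in `s, t` given by a word (`false ↦ s`, `true ↦ t`). -/
def mono (w : List Bool) : Module.End ℚ V :=
  (w.map (fun b => if b then tR else sR)).prod

/-- The ring `R₂` generated by `s` and `t` (a non-unital subring of `End ℚ V`). -/
def R2 : NonUnitalSubring (Module.End ℚ V) := NonUnitalSubring.closure {sR, tR}

end

noncomputable section

/-- The element `(tst)³`. -/
def g19 : Module.End ℚ V := (tR * sR * tR) ^ 3

/-- The two-sided ideal `N` of `R₂` generated by `(tst)³`. -/
def Nideal : Set (Module.End ℚ V) :=
  (Submodule.span ℤ ({g19} ∪ (fun r => r * g19) '' (R2 : Set (Module.End ℚ V)) ∪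
      (fun r => g19 * r) '' (R2 : Set (Module.End ℚ V)) ∪
      {x | ∃ r ∈ R2, ∃ r' ∈ R2, x = r * g19 * r'}) : Submodule ℤ (Module.End ℚ V))

open Finsupp in
lemma end_ext {f g : Module.End ℚ V}
    (h : ∀ w : List Bool, f (Finsupp.single w 1) = g (Finsupp.single w 1)) : f = g := by
  apply Finsupp.lhom_ext
  intro a b
  have hb : (Finsupp.single a b : V) = b • Finsupp.single a 1 := by
    rw [Finsupp.smul_single, smul_eq_mul, mul_one]
  rw [hb, map_smul, map_smul, h]

lemma pre_single (b : Bool) (u : List Bool) :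
    pre b (Finsupp.single u (1:ℚ)) = Finsupp.single (b :: u) 1 := by
  simp [pre, Finsupp.mapDomain_single]

lemma blk_nil (e : ℚ) (A B C D : Module.End ℚ V) :
    blk e A B C D (Finsupp.single ([] : List Bool) 1) = Finsupp.single [] e := by
  simp [blk, Finsupp.linearCombination_single]

lemma blk_false (e : ℚ) (A B C D : Module.End ℚ V) (u : List Bool) :
    blk e A B C D (Finsupp.single (false :: u) 1)
      = pre false (A (Finsupp.single u 1)) + pre true (C (Finsupp.single u 1)) := by
  simp [blk, Finsupp.linearCombination_single]

lemma blk_true (e : ℚ) (A B C D : Module.End ℚ V) (u : List Bool) :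
    blk e A B C D (Finsupp.single (true :: u) 1)
      = pre false (B (Finsupp.single u 1)) + pre true (D (Finsupp.single u 1)) := by
  simp [blk, Finsupp.linearCombination_single]

lemma blk_preF (e : ℚ) (A B C D : Module.End ℚ V) (y : V) :
    blk e A B C D (pre false y) = pre false (A y) + pre true (C y) := by
  induction y using Finsupp.induction_linear with
  | zero => simp
  | add f g hf hg => simp only [map_add, hf, hg]; abel
  | single a b =>
    have hb : (Finsupp.single a b : V) = b • Finsupp.single a 1 := by
      rw [Finsupp.smul_single, smul_eq_mul, mul_one]
    simp only [hb, map_smul, pre_single, blk_false, smul_add]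

lemma blk_preT (e : ℚ) (A B C D : Module.End ℚ V) (y : V) :
    blk e A B C D (pre true y) = pre false (B y) + pre true (D y) := by
  induction y using Finsupp.induction_linear with
  | zero => simp
  | add f g hf hg => simp only [map_add, hf, hg]; abel
  | single a b =>
    have hb : (Finsupp.single a b : V) = b • Finsupp.single a 1 := by
      rw [Finsupp.smul_single, smul_eq_mul, mul_one]
    simp only [hb, map_smul, pre_single, blk_true, smul_add]

lemma blk_mul (e e' : ℚ) (A B C D A' B' C' D' : Module.End ℚ V) :
    blk e A B C D * blk e' A' B' C' D' =
      blk (e*e') (A*A'+B*C') (A*B'+B*D') (C*A'+D*C') (C*B'+D*D') := by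
  apply end_ext
  intro w
  match w with
  | [] =>
    rw [Module.End.mul_apply, blk_nil, blk_nil]
    have hb : (Finsupp.single ([] : List Bool) e' : V) = e' • Finsupp.single [] 1 := by
      rw [Finsupp.smul_single, smul_eq_mul, mul_one]
    rw [hb, map_smul, blk_nil, Finsupp.smul_single, smul_eq_mul, mul_comm]
  | false :: u =>
    simp only [Module.End.mul_apply, blk_false, map_add, blk_preF, blk_preT,
      LinearMap.add_apply]
    abel
  | true :: u =>
    simp only [Module.End.mul_apply, blk_true, map_add, blk_preF, blk_preT,
      LinearMap.add_apply]
    abel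

lemma blk_zero : blk 0 0 0 0 0 = (0 : Module.End ℚ V) := by
  apply end_ext
  intro w
  match w with
  | [] => rw [blk_nil]; simp
  | false :: u => rw [blk_false]; simp
  | true :: u => rw [blk_true]; simp

lemma sR_single (u : List Bool) : sR (Finsupp.single u 1) = Sfun u := by
  simp [sR, Finsupp.linearCombination_single]

lemma tR_single (u : List Bool) : tR (Finsupp.single u 1) = Tfun u := by
  simp [tR, Finsupp.linearCombination_single]

lemma sR_eq : sR = blk 0 0 0 1 0 := by
  apply end_ext
  intro w
  match w with
  | [] => rw [sR_single, blk_nil]; simp [Sfun]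
  | false :: u => rw [sR_single, blk_false]; simp [Sfun, pre_single]
  | true :: u => rw [sR_single, blk_true]; simp [Sfun]

lemma tR_eq : tR = blk 0 0 tR 0 sR := by
  apply end_ext
  intro w
  match w with
  | [] => rw [tR_single, blk_nil]; simp [Tfun]
  | false :: u => rw [tR_single, blk_false]; simp [Tfun]
  | true :: u => rw [tR_single, blk_true, tR_single, sR_single]; simp [Tfun]

lemma s2 : sR * sR = 0 := by
  rw [sR_eq]
  rw [blk_mul]
  simp only [mul_zero, zero_mul, add_zero, zero_add, mul_one, one_mul]
  exact blk_zero

lemma l_st : sR * tR = blk 0 0 0 0 tR := by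
  calc sR * tR = blk 0 0 0 1 0 * blk 0 0 tR 0 sR := by rw [← sR_eq, ← tR_eq]
    _ = blk 0 0 0 0 tR := by rw [blk_mul]; simp

lemma l_ts : tR * sR = blk 0 tR 0 sR 0 := by
  calc tR * sR = blk 0 0 tR 0 sR * blk 0 0 0 1 0 := by rw [← sR_eq, ← tR_eq]
    _ = blk 0 tR 0 sR 0 := by rw [blk_mul]; simp

lemma l_t2 : tR * tR = blk 0 0 (tR * sR) 0 0 := by
  calc tR * tR = blk 0 0 tR 0 sR * blk 0 0 tR 0 sR := by rw [← tR_eq]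
    _ = blk 0 0 (tR * sR) 0 0 := by rw [blk_mul]; simp [s2]

lemma l_t3 : (tR * tR) * tR = 0 := by
  calc (tR * tR) * tR = blk 0 0 (tR * sR) 0 0 * blk 0 0 tR 0 sR := by
        rw [← tR_eq, ← l_t2]
    _ = 0 := by
        rw [blk_mul]
        simp only [mul_zero, zero_mul, add_zero, zero_add, mul_assoc, s2]
        exact blk_zero

lemma t3r : tR * (tR * tR) = 0 := by rw [← mul_assoc]; exact l_t3

lemma l_tst : (tR * sR) * tR = blk 0 0 (tR * tR) 0 (sR * tR) := by
  calc (tR * sR) * tR = blk 0 tR 0 sR 0 * blk 0 0 tR 0 sR := by rw [← tR_eq, ← l_ts]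
    _ = _ := by rw [blk_mul]; simp

lemma l_stt : (sR * tR) * tR = blk 0 0 0 0 (tR * sR) := by
  calc (sR * tR) * tR = blk 0 0 0 0 tR * blk 0 0 tR 0 sR := by rw [← tR_eq, ← l_st]
    _ = _ := by rw [blk_mul]; simp

lemma l_tsts : ((tR * sR) * tR) * sR = blk 0 (tR * tR) 0 (sR * tR) 0 := by
  calc ((tR * sR) * tR) * sR
      = blk 0 0 (tR * tR) 0 (sR * tR) * blk 0 0 0 1 0 := by rw [← sR_eq, ← l_tst]
    _ = _ := by rw [blk_mul]; simp

lemma l_tstst : (((tR * sR) * tR) * sR) * tR = blk 0 0 0 0 ((sR * tR) * tR) := by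
  calc (((tR * sR) * tR) * sR) * tR
      = blk 0 (tR * tR) 0 (sR * tR) 0 * blk 0 0 tR 0 sR := by rw [← tR_eq, ← l_tsts]
    _ = _ := by rw [blk_mul]; simp [l_t3]

lemma l_ts2 : (tR * sR) * (tR * sR) = blk 0 (tR * tR) 0 (sR * tR) 0 := by
  calc (tR * sR) * (tR * sR) = blk 0 tR 0 sR 0 * blk 0 tR 0 sR 0 := by rw [← l_ts]
    _ = _ := by rw [blk_mul]; simp

lemma l_ts3 : ((tR * sR) * (tR * sR)) * (tR * sR) = blk 0 0 0 ((sR * tR) * tR) 0 := by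
  calc ((tR * sR) * (tR * sR)) * (tR * sR)
      = blk 0 (tR * tR) 0 (sR * tR) 0 * blk 0 tR 0 sR 0 := by rw [← l_ts, ← l_ts2]
    _ = _ := by rw [blk_mul]; simp [l_t3]

lemma l_ts4 : (((tR * sR) * (tR * sR)) * (tR * sR)) * (tR * sR) = 0 := by
  calc (((tR * sR) * (tR * sR)) * (tR * sR)) * (tR * sR)
      = blk 0 0 0 ((sR * tR) * tR) 0 * blk 0 tR 0 sR 0 := by rw [← l_ts, ← l_ts3]
    _ = 0 := by
        rw [blk_mul]
        simp only [mul_zero, zero_mul, add_zero, zero_add, mul_assoc, t3r]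
        exact blk_zero

lemma d_mul (X Y : Module.End ℚ V) :
    blk 0 0 0 0 X * blk 0 0 0 0 Y = blk 0 0 0 0 (X * Y) := by
  rw [blk_mul]; simp

lemma st3 : ((sR * tR) * (sR * tR)) * (sR * tR) = 0 := by
  rw [l_st, d_mul, d_mul]
  have h : (tR * tR) * tR = 0 := l_t3
  rw [h]
  exact blk_zero

lemma M5 : (((tR * sR) * tR) * sR) * tR = blk 0 0 0 0 (blk 0 0 0 0 (tR * sR)) := by
  rw [l_tstst, l_stt]

lemma R5 : (((((tR * sR) * tR) * sR) * tR * ((((tR * sR) * tR) * sR) * tR)) *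
    ((((tR * sR) * tR) * sR) * tR)) * ((((tR * sR) * tR) * sR) * tR) = 0 := by
  rw [M5, d_mul, d_mul, d_mul, d_mul, d_mul, d_mul, l_ts4, blk_zero, blk_zero]

lemma st3r : sR * (tR * (sR * (tR * (sR * tR)))) = 0 := by
  simpa [mul_assoc] using st3

lemma R5r : tR * (sR * (tR * (sR * (tR * (tR * (sR * (tR * (sR * (tR * (tR * (sR *
    (tR * (sR * (tR * (tR * (sR * (tR * (sR * tR)))))))))))))))))) = 0 := by
  simpa [mul_assoc] using R5

/-- The forbidden patterns: `ss`, `ttt`, `(st)³`, `(tstst)⁴`, and the word of `(tst)³`. -/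
def pats : List (List Bool) :=
  [[false, false],
   [true, true, true],
   [false, true, false, true, false, true],
   [true, false, true, false, true, true, false, true, false, true,
    true, false, true, false, true, true, false, true, false, true],
   [true, false, true, true, false, true, true, false, true]]

lemma mono_append (u v : List Bool) : mono (u ++ v) = mono u * mono v := by
  simp [mono]

lemma mz1 : mono [false, false] = 0 := by simp [mono, s2]

lemma mz2 : mono [true, true, true] = 0 := by simp [mono, t3r]

lemma mz3 : mono [false, true, false, true, false, true] = 0 := by simp [mono, st3r]

lemma mz4 : mono [true, false, true, false, true, true, false, true, false, true,
    true, false, true, false, true, true, false, true, false, true] = 0 := by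
  simp [mono, mul_assoc, R5r]

lemma m19 : mono [true, false, true, true, false, true, true, false, true] = g19 := by
  simp [mono, g19, pow_three, mul_assoc]

def okp (w : List Bool) : Bool := !(pats.any (fun p => p.isPrefixOf w))

def srch : Nat → List Bool → Bool
  | 0, _ => true
  | n+1, w => (okp (false :: w) && srch n (false :: w)) || (okp (true :: w) && srch n (true :: w))

lemma srch_spec : ∀ (n : Nat) (w : List Bool), (∀ p ∈ pats, ¬ p <:+: w) →
    srch n w = false → ∀ u : List Bool, u.length = n → ∃ p ∈ pats, p <:+: (u ++ w) := by
  intro n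
  induction n with
  | zero => intro w hg hs; simp [srch] at hs
  | succ n ih =>
    intro w hg hs u hu
    rcases List.eq_nil_or_concat u with rfl | ⟨u', b, rfl⟩
    · simp at hu
    · have hlen : u'.length = n := by
        simpa [List.concat_eq_append] using hu
      have happ : u'.concat b ++ w = u' ++ (b :: w) := by
        simp [List.concat_eq_append, List.append_assoc]
      rw [happ]
      by_cases hb : ∃ p ∈ pats, p <:+: (b :: w)
      · obtain ⟨p, hp, hpi⟩ := hb
        exact ⟨p, hp, hpi.trans (List.suffix_append u' (b :: w)).isInfix⟩
      · have hg' : ∀ p ∈ pats, ¬ p <:+: (b :: w) := fun p hp hi => hb ⟨p, hp, hi⟩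
        have hok : okp (b :: w) = true := by
          have hnp : ∀ p ∈ pats, ¬ p <+: (b :: w) := fun p hp hi => hg' p hp hi.isInfix
          simp only [okp, Bool.not_eq_true', List.any_eq_false]
          intro p hp
          simpa using hnp p hp
        have hs' : srch n (b :: w) = false := by
          rw [srch] at hs
          rcases Bool.or_eq_false_iff.mp hs with ⟨h1, h2⟩
          cases b
          · rcases Bool.and_eq_false_iff.mp h1 with h | h
            · rw [hok] at h; exact absurd h (by simp)
            · exact h
          · rcases Bool.and_eq_false_iff.mp h2 with h | h
            · rw [hok] at h; exact absurd h (by simp)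
            · exact h
        exact ih (b :: w) hg' hs' u' hlen

lemma key (w : List Bool) (hw : 26 ≤ w.length) : ∃ p ∈ pats, p <:+: w := by
  have h0 : ∀ p ∈ pats, ¬ p <:+: ([] : List Bool) := by
    intro p hp h
    rw [List.infix_nil] at h
    subst h
    simp [pats] at hp
  have hs : srch 26 [] = false := by decide
  obtain ⟨p, hp, hpi⟩ := srch_spec 26 [] h0 hs (w.take 26)
    (by simpa using Nat.min_eq_left hw)
  refine ⟨p, hp, ?_⟩
  have h1 : p <:+: w.take 26 := by simpa using hpi
  exact h1.trans (List.take_prefix 26 w).isInfix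

lemma sR_mem : sR ∈ R2 := NonUnitalSubring.subset_closure (Set.mem_insert sR {tR})

lemma tR_mem : tR ∈ R2 := NonUnitalSubring.subset_closure (Set.mem_insert_of_mem sR rfl)

lemma gen_mem (b : Bool) : (if b then tR else sR) ∈ R2 := by
  cases b
  · simpa using sR_mem
  · simpa using tR_mem

lemma mono_mem_R2 : ∀ (w : List Bool), w ≠ [] → mono w ∈ R2
  | [], h => absurd rfl h
  | [b], _ => by simpa [mono] using gen_mem b
  | b :: c :: w, _ => by
    have h1 : mono (c :: w) ∈ R2 := mono_mem_R2 (c :: w) (by simp)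
    have h2 : mono (b :: c :: w) = (if b then tR else sR) * mono (c :: w) := by
      simp [mono]
    rw [h2]
    exact mul_mem (gen_mem b) h1

lemma mem_Nideal {x : Module.End ℚ V} : x ∈ Nideal ↔
    x ∈ Submodule.span ℤ ({g19} ∪ (fun r => r * g19) '' (R2 : Set (Module.End ℚ V)) ∪
      (fun r => g19 * r) '' (R2 : Set (Module.End ℚ V)) ∪
      {x | ∃ r ∈ R2, ∃ r' ∈ R2, x = r * g19 * r'}) := Iff.rfl

lemma long_mem (w : List Bool) (hw : 26 ≤ w.length) : mono w ∈ Nideal := by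
  obtain ⟨p, hp, u, v, huv⟩ := key w hw
  rw [mem_Nideal]
  have hmono : mono w = mono u * mono p * mono v := by
    rw [← huv, mono_append, mono_append]
  have hpc : p = [false, false] ∨ p = [true, true, true] ∨
      p = [false, true, false, true, false, true] ∨
      p = [true, false, true, false, true, true, false, true, false, true,
        true, false, true, false, true, true, false, true, false, true] ∨
      p = [true, false, true, true, false, true, true, false, true] := by
    simpa [pats] using hp
  rcases hpc with rfl | rfl | rfl | rfl | rfl
  · rw [hmono, mz1, mul_zero, zero_mul]; exact Submodule.zero_mem _
  · rw [hmono, mz2, mul_zero, zero_mul]; exact Submodule.zero_mem _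
  · rw [hmono, mz3, mul_zero, zero_mul]; exact Submodule.zero_mem _
  · rw [hmono, mz4, mul_zero, zero_mul]; exact Submodule.zero_mem _
  · rw [hmono, m19]
    rcases eq_or_ne u [] with rfl | hu <;> rcases eq_or_ne v [] with rfl | hv
    · have h : mono ([] : List Bool) * g19 * mono ([] : List Bool) = g19 := by
        simp [mono]
      rw [h]
      exact Submodule.subset_span (Or.inl (Or.inl (Or.inl rfl)))
    · have h : mono ([] : List Bool) * g19 * mono v = g19 * mono v := by
        simp [mono]
      rw [h]
      exact Submodule.subset_span (Or.inl (Or.inr ⟨mono v, mono_mem_R2 v hv, rfl⟩))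
    · have h : mono u * g19 * mono ([] : List Bool) = mono u * g19 := by
        simp [mono]
      rw [h]
      exact Submodule.subset_span (Or.inl (Or.inl (Or.inr ⟨mono u, mono_mem_R2 u hu, rfl⟩)))
    · exact Submodule.subset_span
        (Or.inr ⟨mono u, mono_mem_R2 u hu, mono v, mono_mem_R2 v hv, rfl⟩)

lemma span_mono_mul {x y : Module.End ℚ V}
    (hx : x ∈ Submodule.span ℤ (mono '' {w : List Bool | w ≠ []}))
    (hy : y ∈ Submodule.span ℤ (mono '' {w : List Bool | w ≠ []})) :
    x * y ∈ Submodule.span ℤ (mono '' {w : List Bool | w ≠ []}) := by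
  induction hx, hy using Submodule.span_induction₂ with
  | mem_mem a b ha hb =>
    obtain ⟨u, hu, rfl⟩ := ha
    obtain ⟨v, hv, rfl⟩ := hb
    have hne : u ++ v ≠ [] := fun h => hu (List.append_eq_nil_iff.mp h).1
    exact Submodule.subset_span ⟨u ++ v, hne, mono_append u v⟩
  | zero_left y hy => rw [zero_mul]; exact Submodule.zero_mem _
  | zero_right x hx => rw [mul_zero]; exact Submodule.zero_mem _
  | add_left x y z hx hy hz h1 h2 => rw [add_mul]; exact Submodule.add_mem _ h1 h2
  | add_right x y z hx hy hz h1 h2 => rw [mul_add]; exact Submodule.add_mem _ h1 h2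
  | smul_left r x y hx hy h => rw [smul_mul_assoc]; exact Submodule.smul_mem _ _ h
  | smul_right r x y hx hy h => rw [mul_smul_comm]; exact Submodule.smul_mem _ _ h

lemma R2_span {x : Module.End ℚ V} (hx : x ∈ R2) :
    x ∈ Submodule.span ℤ (mono '' {w : List Bool | w ≠ []}) := by
  have hx' : x ∈ NonUnitalSubring.closure {sR, tR} := hx
  clear hx
  induction hx' using NonUnitalSubring.closure_induction with
  | mem y hy =>
    rcases hy with rfl | rfl
    · exact Submodule.subset_span ⟨[false], by simp, by simp [mono]⟩
    · exact Submodule.subset_span ⟨[true], by simp, by simp [mono]⟩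
  | zero => exact Submodule.zero_mem _
  | add x y hx hy h1 h2 => exact Submodule.add_mem _ h1 h2
  | neg x hx h => exact Submodule.neg_mem _ h
  | mul x y hx hy h1 h2 => exact span_mono_mul h1 h2

/-- The quotient `R₂/N` by the ideal generated by `(tst)³` has finite `ℤ`-rank: only
finitely many monomials are nonzero modulo `N`, and `R₂` is spanned over `ℤ` by finitely
many elements together with `N`. -/
theorem quotient_finite_rank :
    {w : List Bool | w ≠ [] ∧ mono w ∉ Nideal}.Finite ∧
    ∃ F : Finset (Module.End ℚ V), ∀ x ∈ R2,
      x ∈ Submodule.span ℤ ((F : Set (Module.End ℚ V)) ∪ Nideal) := by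
  constructor
  · apply (List.finite_length_lt Bool 26).subset
    intro w hw
    simp only [Set.mem_setOf_eq] at hw ⊢
    by_contra h
    exact hw.2 (long_mem w (by omega))
  · classical
    refine ⟨(List.finite_length_lt Bool 26).toFinset.image mono, ?_⟩
    intro x hx
    refine Submodule.span_le.mpr ?_ (R2_span hx)
    rintro y ⟨w, hw, rfl⟩
    by_cases hlen : w.length < 26
    · refine Submodule.subset_span (Or.inl ?_)
      simp only [Finset.coe_image, Set.mem_image, Finset.mem_coe,
        Set.Finite.coe_toFinset, Set.mem_setOf_eq]
      exact ⟨w, hlen, rfl⟩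
    · exact Submodule.subset_span (Or.inr (long_mem w (by omega)))

end
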